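/- Let 0 < μ ≤ L, let f ∈ S¹_{μ,L}(ℝ^d), and let 0 < s < 1/L. For any x, y ∈ ℝ^d, set x⁺ = y − s∇f(y) and v = (x⁺ − x)/√s. Then f(x⁺) − f(x) ≤ √s(1 − μs)⟨∇f(y), v⟩ + (s²(L − μ)/2)‖∇f(y)‖² − (μs/2)‖v‖². -/

import Mathlib

open scoped RealInnerProductSpace

section Aux
open Set

variable {E : Type*} [NormedAddCommGroup E] [InnerProductSpace ℝ E] [CompleteSpace E]

lemma line_hasDerivAt (f : E → ℝ) (f' : E → E)
    (hdiff : ∀ z, HasGradientAt f (f' z) z) (a b : E) (t : ℝ) :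
    HasDerivAt (fun t : ℝ => f (a + t • (b - a))) ⟪f' (a + t • (b - a)), b - a⟫ t := by
  have h1 : HasDerivAt (fun t : ℝ => a + t • (b - a)) (b - a) t := by
    simpa using ((hasDerivAt_id t).smul_const (b - a)).const_add a
  have h2 := (hdiff (a + t • (b - a))).hasFDerivAt.comp_hasDerivAt t h1
  simp at h2
  exact h2

lemma descent_lemma {L : ℝ} (hL : 0 ≤ L) (f : E → ℝ) (f' : E → E)
    (hdiff : ∀ z, HasGradientAt f (f' z) z)
    (hlip : ∀ z w, ‖f' z - f' w‖ ≤ L * ‖z - w‖) (a b : E) :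
    f b ≤ f a + ⟪f' a, b - a⟫ + L / 2 * ‖b - a‖ ^ 2 := by
  set h : ℝ → ℝ := fun t => f (a + t • (b - a)) - t * ⟪f' a, b - a⟫
    - t ^ 2 * (L / 2 * ‖b - a‖ ^ 2) with hh
  have hd : ∀ t : ℝ, HasDerivAt h
      (⟪f' (a + t • (b - a)), b - a⟫ - ⟪f' a, b - a⟫ - 2 * t * (L / 2 * ‖b - a‖ ^ 2)) t := by
    intro t
    have h1 := line_hasDerivAt f f' hdiff a b t
    have h2 : HasDerivAt (fun t : ℝ => t * ⟪f' a, b - a⟫) ⟪f' a, b - a⟫ t := by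
      simpa using (hasDerivAt_id t).mul_const ⟪f' a, b - a⟫
    have h3 : HasDerivAt (fun t : ℝ => t ^ 2 * (L / 2 * ‖b - a‖ ^ 2))
        (2 * t * (L / 2 * ‖b - a‖ ^ 2)) t := by
      simpa using (hasDerivAt_pow 2 t).mul_const (L / 2 * ‖b - a‖ ^ 2)
    exact (h1.sub h2).sub h3
  have hanti : AntitoneOn h (Icc (0:ℝ) 1) := by
    apply antitoneOn_of_deriv_nonpos (convex_Icc 0 1)
    · exact fun t _ => ((hd t).differentiableAt).continuousAt.continuousWithinAt
    · exact fun t _ => ((hd t).differentiableAt).differentiableWithinAt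
    · intro t ht
      rw [interior_Icc] at ht
      rw [(hd t).deriv]
      have key : ⟪f' (a + t • (b - a)) - f' a, b - a⟫ ≤ L * t * ‖b - a‖ ^ 2 := by
        calc ⟪f' (a + t • (b - a)) - f' a, b - a⟫
            ≤ ‖f' (a + t • (b - a)) - f' a‖ * ‖b - a‖ := real_inner_le_norm _ _
          _ ≤ (L * ‖(a + t • (b - a)) - a‖) * ‖b - a‖ := by
              apply mul_le_mul_of_nonneg_right _ (norm_nonneg _)
              exact hlip _ _
          _ = L * t * ‖b - a‖ ^ 2 := by
              rw [add_sub_cancel_left, norm_smul, Real.norm_eq_abs,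
                abs_of_pos ht.1]
              ring
      rw [inner_sub_left] at key
      nlinarith [ht.1.le]
  have h10 := hanti (left_mem_Icc.2 zero_le_one) (right_mem_Icc.2 zero_le_one) zero_le_one
  simp only [hh] at h10
  have e1 : a + (1:ℝ) • (b - a) = b := by simp
  have e0 : a + (0:ℝ) • (b - a) = a := by simp
  rw [e1, e0] at h10
  nlinarith [h10]

lemma strong_convex_ineq {μ : ℝ} (f : E → ℝ) (f' : E → E)
    (hdiff : ∀ z, HasGradientAt f (f' z) z)
    (hsc : ConvexOn ℝ Set.univ (fun z => f z - μ / 2 * ‖z‖ ^ 2)) (x y : E) :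
    f y + ⟪f' y, x - y⟫ + μ / 2 * ‖x - y‖ ^ 2 ≤ f x := by
  set A : ℝ := ⟪y, x - y⟫ with hA
  set B : ℝ := ‖x - y‖ ^ 2 with hB
  have hnorm : ∀ t : ℝ, ‖y + t • (x - y)‖ ^ 2 = ‖y‖ ^ 2 + 2 * A * t + B * t ^ 2 := by
    intro t
    rw [norm_add_sq_real, real_inner_smul_right, norm_smul, Real.norm_eq_abs,
      mul_pow, sq_abs]
    ring
  set φ : ℝ → ℝ := fun t => f (y + t • (x - y))
    - μ / 2 * (‖y‖ ^ 2 + 2 * A * t + B * t ^ 2) with hφ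
  have harg : ∀ t : ℝ, (AffineMap.lineMap y x) t = y + t • (x - y) := by
    intro t
    rw [AffineMap.lineMap_apply_module]
    rw [smul_sub, sub_smul, one_smul]
    abel
  have hconv : ConvexOn ℝ Set.univ φ := by
    have hcomp := hsc.comp_affineMap (AffineMap.lineMap y x)
    have heq : φ = (fun z => f z - μ / 2 * ‖z‖ ^ 2) ∘ (AffineMap.lineMap y x) := by
      funext t
      simp only [hφ, Function.comp_apply, harg t, hnorm t]
    rw [heq]
    simpa using hcomp
  have hder : HasDerivAt φ (⟪f' y, x - y⟫ - μ / 2 * (2 * A)) 0 := by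
    have h1 := line_hasDerivAt f f' hdiff y x 0
    simp only [zero_smul, add_zero] at h1
    have hb : HasDerivAt (fun t : ℝ => 2 * A * t) (2 * A) 0 := by
      simpa using (hasDerivAt_id (0:ℝ)).const_mul (2 * A)
    have hc : HasDerivAt (fun t : ℝ => B * t ^ 2) (B * (2 * 0)) 0 := by
      simpa using (hasDerivAt_pow 2 (0:ℝ)).const_mul B
    have ha : HasDerivAt (fun t : ℝ => ‖y‖ ^ 2 + 2 * A * t + B * t ^ 2)
        (2 * A + B * (2 * 0)) 0 := (hb.const_add (‖y‖ ^ 2)).add hc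
    have h2 := ha.const_mul (μ / 2)
    simp only [mul_zero, add_zero] at h2 ⊢
    exact h1.sub h2
  have hslope := hconv.le_slope_of_hasDerivAt (mem_univ 0) (mem_univ 1) zero_lt_one hder
  rw [slope_def_field] at hslope
  have hyx : y + (1:ℝ) • (x - y) = x := by
    rw [one_smul]; abel
  have hx2 : ‖x‖ ^ 2 = ‖y‖ ^ 2 + 2 * A * 1 + B * 1 ^ 2 := by
    rw [← hyx]; exact hnorm 1
  have hφ1 : φ 1 = f x - μ / 2 * ‖x‖ ^ 2 := by
    simp only [hφ]
    rw [hyx, hx2]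
  have hφ0 : φ 0 = f y - μ / 2 * ‖y‖ ^ 2 := by
    simp only [hφ]
    rw [zero_smul, add_zero]
    ring_nf
  rw [hφ1, hφ0] at hslope
  rw [hx2] at hslope
  norm_num at hslope
  linarith [hslope]

end Aux


theorem potential_energy_key_inequality {d : ℕ} (μ L s : ℝ)
    (hμ : 0 < μ) (hμL : μ ≤ L) (hs : 0 < s) (hsL : s < 1 / L)
    (f : EuclideanSpace ℝ (Fin d) → ℝ)
    (f' : EuclideanSpace ℝ (Fin d) → EuclideanSpace ℝ (Fin d))
    (hdiff : ∀ z, HasGradientAt f (f' z) z)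
    (hlip : ∀ z w, ‖f' z - f' w‖ ≤ L * ‖z - w‖)
    (hsc : ConvexOn ℝ Set.univ (fun z => f z - μ / 2 * ‖z‖ ^ 2))
    :
    ∀ x y xplus v : EuclideanSpace ℝ (Fin d),
      xplus = y - s • f' y → v = (Real.sqrt s)⁻¹ • (xplus - x) →
      f xplus - f x ≤
        Real.sqrt s * (1 - μ * s) * ⟪f' y, v⟫
          + s ^ 2 * (L - μ) / 2 * ‖f' y‖ ^ 2 - μ * s / 2 * ‖v‖ ^ 2 := by
  intro x y xplus v hxp hv
  have hσ : 0 < Real.sqrt s := Real.sqrt_pos.2 hs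
  have hσ2 : Real.sqrt s ^ 2 = s := Real.sq_sqrt hs.le
  have hσv : Real.sqrt s • v = xplus - x := by
    rw [hv, smul_inv_smul₀ (ne_of_gt hσ)]
  have hyx : y - x = Real.sqrt s • v + s • f' y := by
    rw [hσv, hxp]; abel
  have hL0 : 0 ≤ L := le_trans hμ.le hμL
  have hdes := descent_lemma hL0 f f' hdiff hlip y xplus
  have hscq := strong_convex_ineq f f' hdiff hsc x y
  have e1 : xplus - y = -(s • f' y) := by rw [hxp]; abel
  have i1 : ⟪f' y, xplus - y⟫ = -(s * ‖f' y‖ ^ 2) := by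
    rw [e1, inner_neg_right, real_inner_smul_right, real_inner_self_eq_norm_sq]
  have n1 : ‖xplus - y‖ ^ 2 = s ^ 2 * ‖f' y‖ ^ 2 := by
    rw [e1, norm_neg, norm_smul, Real.norm_eq_abs, mul_pow, sq_abs]
  have e2 : x - y = -(Real.sqrt s • v + s • f' y) := by
    rw [← hyx]; abel
  have i2 : ⟪f' y, x - y⟫ = -(Real.sqrt s * ⟪f' y, v⟫ + s * ‖f' y‖ ^ 2) := by
    rw [e2, inner_neg_right, inner_add_right, real_inner_smul_right,
      real_inner_smul_right, real_inner_self_eq_norm_sq]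
  have n2 : ‖x - y‖ ^ 2 = s * ‖v‖ ^ 2 + 2 * (Real.sqrt s * s) * ⟪f' y, v⟫
      + s ^ 2 * ‖f' y‖ ^ 2 := by
    rw [show x - y = -(y - x) by abel, norm_neg, hyx, norm_add_sq_real,
      real_inner_smul_left, real_inner_smul_right, norm_smul, norm_smul,
      Real.norm_eq_abs, Real.norm_eq_abs, mul_pow, mul_pow, sq_abs, sq_abs, hσ2,
      real_inner_comm v (f' y)]
    ring
  rw [i1, n1] at hdes
  rw [i2, n2] at hscq
  linarith [hdes, hscq]
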